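/- Fix θ > 0 and an integer n ≥ 2. Let M_2, ..., M_n be independent random variables on a probability space, where M_k takes values in ℕ₀ with P(M_k = j) = ((k-1)/(θ+k-1)) · (θ/(θ+k-1))^j for all j ∈ ℕ₀, and set S(n) = ∑_{k=2}^{n} M_k. Then for every i ≥ 1, the i-th cumulant of S(n) equals ∑_{k=1}^{n-1} Li_{1-i}(θ/(k+θ)) = ∑_{b=1}^{i} S(i, b) · (b-1)! · θ^b · H_{n-1}^{(b)}, where H_{n-1}^{(b)} = ∑_{k=1}^{n-1} 1/k^b and S(i, b) is the Stirling number of the second kind. -/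

import Mathlib

open MeasureTheory ProbabilityTheory

/-- The `j`-th cumulant of a real random variable `X`: the `j`-th derivative at `0`
of the cumulant generating function `s ↦ log E[e^{sX}]`. -/
noncomputable def cumulant {Ω : Type*} [MeasurableSpace Ω]
    (j : ℕ) (X : Ω → ℝ) (μ : Measure Ω) : ℝ :=
  iteratedDeriv j (fun s => cgf X μ s) 0

/-- The Stirling number of the second kind: the number of partitions of an
`i`-element set into `b` nonempty blocks. -/
noncomputable def stirling2 (i b : ℕ) : ℕ :=
  Nat.card {P : Finset (Finset (Fin i)) //
    P.card = b ∧ ∅ ∉ P ∧ ∀ x : Fin i, ∃! A, A ∈ P ∧ x ∈ A}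

namespace SegAux

variable {i m : ℕ}

def IsPartition (P : Finset (Finset (Fin i))) : Prop :=
  ∅ ∉ P ∧ ∀ x : Fin i, ∃! A, A ∈ P ∧ x ∈ A

instance (P : Finset (Finset (Fin i))) : Decidable (IsPartition P) := by
  unfold IsPartition ExistsUnique
  infer_instance

def ker (f : Fin i → Fin m) : Finset (Finset (Fin i)) :=
  Finset.image (fun x => Finset.univ.filter (fun z => f z = f x)) Finset.univ

lemma mem_ker_iff {f : Fin i → Fin m} {A : Finset (Fin i)} :
    A ∈ ker f ↔ ∃ x, A = Finset.univ.filter (fun z => f z = f x) := by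
  simp [ker, eq_comm]

lemma ker_isPartition (f : Fin i → Fin m) : IsPartition (ker f) := by
  constructor
  · intro h
    rcases mem_ker_iff.1 h with ⟨x, hx⟩
    have : x ∈ (∅ : Finset (Fin i)) := by
      rw [hx]; simp
    simp at this
  · intro x
    refine ⟨Finset.univ.filter (fun z => f z = f x), ⟨mem_ker_iff.2 ⟨x, rfl⟩, by simp⟩, ?_⟩
    rintro A ⟨hA, hxA⟩
    rcases mem_ker_iff.1 hA with ⟨y, rfl⟩
    have hfx : f x = f y := by simpa using hxA
    ext z; simp [hfx]

def blockOf {P : Finset (Finset (Fin i))} (hP : IsPartition P) (x : Fin i) : Finset (Fin i) :=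
  P.choose (fun A => x ∈ A) (hP.2 x)

lemma blockOf_mem {P : Finset (Finset (Fin i))} (hP : IsPartition P) (x : Fin i) :
    blockOf hP x ∈ P := Finset.choose_mem (fun A => x ∈ A) P (hP.2 x)

lemma mem_blockOf {P : Finset (Finset (Fin i))} (hP : IsPartition P) (x : Fin i) :
    x ∈ blockOf hP x := Finset.choose_property (fun A => x ∈ A) P (hP.2 x)

lemma eq_blockOf {P : Finset (Finset (Fin i))} (hP : IsPartition P) {x : Fin i}
    {A : Finset (Fin i)} (hA : A ∈ P) (hx : x ∈ A) : A = blockOf hP x :=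
  (hP.2 x).unique ⟨hA, hx⟩ ⟨blockOf_mem hP x, mem_blockOf hP x⟩

lemma block_nonempty {P : Finset (Finset (Fin i))} (hP : IsPartition P) {A : Finset (Fin i)}
    (hA : A ∈ P) : A.Nonempty := by
  rcases Finset.eq_empty_or_nonempty A with rfl | h
  · exact absurd hA hP.1
  · exact h

lemma block_eq_fiber {f : Fin i → Fin m} {P : Finset (Finset (Fin i))}
    (hP : IsPartition P) (hf : ker f = P) (x : Fin i) :
    blockOf hP x = Finset.univ.filter (fun z => f z = f x) := by
  refine (eq_blockOf hP ?_ (by simp)).symm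
  rw [← hf]; exact mem_ker_iff.2 ⟨x, rfl⟩

def kerEquiv {P : Finset (Finset (Fin i))} (hP : IsPartition P) :
    {f : Fin i → Fin m // ker f = P} ≃ ({A // A ∈ P} ↪ Fin m) where
  toFun f := ⟨fun A => f.1 ((A.1).min' (block_nonempty hP A.2)), by
    rintro ⟨A, hA⟩ ⟨B, hB⟩ hAB
    simp only at hAB
    have h1 : A = Finset.univ.filter (fun z => f.1 z = f.1 (A.min' (block_nonempty hP hA))) := by
      rw [← block_eq_fiber hP f.2]
      exact eq_blockOf hP hA (Finset.min'_mem _ _)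
    have h2 : B = Finset.univ.filter (fun z => f.1 z = f.1 (B.min' (block_nonempty hP hB))) := by
      rw [← block_eq_fiber hP f.2]
      exact eq_blockOf hP hB (Finset.min'_mem _ _)
    rw [hAB] at h1
    exact Subtype.ext (h1.trans h2.symm)⟩
  invFun g := ⟨fun x => g ⟨blockOf hP x, blockOf_mem hP x⟩, by
    have key : ∀ x z : Fin i,
        (g ⟨blockOf hP z, blockOf_mem hP z⟩ = g ⟨blockOf hP x, blockOf_mem hP x⟩)
          ↔ z ∈ blockOf hP x := by
      intro x z
      rw [EmbeddingLike.apply_eq_iff_eq, Subtype.mk.injEq]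
      constructor
      · intro h; rw [← h]; exact mem_blockOf hP z
      · intro hz; exact (eq_blockOf hP (blockOf_mem hP x) hz).symm
    ext A
    rw [mem_ker_iff]
    constructor
    · rintro ⟨x, rfl⟩
      have : Finset.univ.filter
          (fun z => g ⟨blockOf hP z, blockOf_mem hP z⟩ = g ⟨blockOf hP x, blockOf_mem hP x⟩)
            = blockOf hP x := by
        ext z
        simp only [Finset.mem_filter, Finset.mem_univ, true_and]
        exact key x z
      rw [this]; exact blockOf_mem hP x
    · intro hA
      obtain ⟨a, ha⟩ := block_nonempty hP hA
      refine ⟨a, ?_⟩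
      have hAa : A = blockOf hP a := eq_blockOf hP hA ha
      ext z
      simp only [Finset.mem_filter, Finset.mem_univ, true_and, key a z, hAa]⟩
  left_inv := by
    rintro ⟨f, hf⟩
    apply Subtype.ext
    funext x
    show f ((blockOf hP x).min' _) = f x
    have hb := block_eq_fiber hP hf x
    have hmem : (blockOf hP x).min' (block_nonempty hP (blockOf_mem hP x)) ∈
        Finset.univ.filter (fun z => f z = f x) := by
      rw [← hb]; exact Finset.min'_mem _ _
    exact (Finset.mem_filter.1 hmem).2
  right_inv := by
    intro g
    apply DFunLike.ext
    rintro ⟨A, hA⟩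
    show g ⟨blockOf hP _, _⟩ = g ⟨A, hA⟩
    congr 1
    exact Subtype.ext (eq_blockOf hP hA (Finset.min'_mem _ _)).symm

lemma card_fiber_eq {P : Finset (Finset (Fin i))} (hP : IsPartition P) :
    (Finset.univ.filter (fun f : Fin i → Fin m => ker f = P)).card =
      m.descFactorial P.card := by
  classical
  rw [← Fintype.card_subtype]
  rw [Fintype.card_congr (kerEquiv hP)]
  rw [Fintype.card_embedding_eq]
  simp [Fintype.card_coe]

lemma card_partition_le {P : Finset (Finset (Fin i))} (hP : IsPartition P) : P.card ≤ i := by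
  classical
  have hdisj : ∀ A ∈ P, ∀ B ∈ P, A ≠ B → Disjoint (id A) (id B) := by
    intro A hA B hB hAB
    rw [Finset.disjoint_left]
    intro x hxA hxB
    exact hAB ((eq_blockOf hP hA hxA).trans (eq_blockOf hP hB hxB).symm)
  have hcover : P.biUnion id = Finset.univ := by
    ext x
    simp only [Finset.mem_biUnion, id, Finset.mem_univ, iff_true]
    exact ⟨blockOf hP x, blockOf_mem hP x, mem_blockOf hP x⟩
  have h1 : ∑ A ∈ P, A.card = i := by
    have := (Finset.card_biUnion hdisj).symm
    rw [hcover] at this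
    simpa using this
  calc P.card = ∑ _A ∈ P, 1 := by simp
  _ ≤ ∑ A ∈ P, A.card := Finset.sum_le_sum fun A hA => Finset.card_pos.2 (block_nonempty hP hA)
  _ = i := h1

lemma stirling2_eq_card (b : ℕ) [DecidablePred (fun P : Finset (Finset (Fin i)) => IsPartition P ∧ P.card = b)] :
    stirling2 i b =
      (Finset.univ.filter (fun P : Finset (Finset (Fin i)) =>
        IsPartition P ∧ P.card = b)).card := by
  classical
  rw [stirling2, Nat.card_eq_fintype_card, Fintype.card_subtype]
  congr 1
  ext P
  simp only [Finset.mem_filter, Finset.mem_univ, true_and]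
  unfold IsPartition
  tauto

theorem pow_eq_sum_stirling (m i : ℕ) :
    m ^ i = ∑ b ∈ Finset.range (i + 1), stirling2 i b * m.descFactorial b := by
  classical
  have h0 : m ^ i = (Finset.univ : Finset (Fin i → Fin m)).card := by
    simp [Fintype.card_fun]
  let T : Finset (Finset (Finset (Fin i))) := Finset.univ.filter (fun P => IsPartition P)
  have h1 : (Finset.univ : Finset (Fin i → Fin m)).card =
      ∑ P ∈ T, (Finset.univ.filter (fun f : Fin i → Fin m => ker f = P)).card := by
    apply Finset.card_eq_sum_card_fiberwise
    intro f _
    simp only [T, Finset.mem_filter, Finset.mem_univ, true_and]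
    exact Finset.mem_coe.2 (Finset.mem_filter.2 ⟨Finset.mem_univ _, ker_isPartition f⟩)
  have h2 : ∀ P ∈ T, (Finset.univ.filter (fun f : Fin i → Fin m => ker f = P)).card
      = m.descFactorial P.card := by
    intro P hP
    exact card_fiber_eq (Finset.mem_filter.1 hP).2
  rw [h0, h1, Finset.sum_congr rfl h2]
  rw [← Finset.sum_fiberwise_of_maps_to (g := fun P => Finset.card P)
    (t := Finset.range (i+1)) (fun P hP => Finset.mem_range.2
      (Nat.lt_succ_of_le (card_partition_le (Finset.mem_filter.1 hP).2)))]
  apply Finset.sum_congr rfl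
  intro b _
  have hTb : (T.filter fun P => P.card = b)
      = Finset.univ.filter (fun P : Finset (Finset (Fin i)) => IsPartition P ∧ P.card = b) := by
    ext P
    simp only [T, Finset.mem_filter, Finset.mem_univ, true_and]
  have : ∀ P ∈ T.filter (fun P => P.card = b), m.descFactorial P.card = m.descFactorial b := by
    intro P hP
    rw [(Finset.mem_filter.1 hP).2]
  rw [Finset.sum_congr rfl this, Finset.sum_const, hTb, ← stirling2_eq_card, smul_eq_mul,
    mul_comm]

theorem stirling2_zero_right {i : ℕ} (hi : 1 ≤ i) : stirling2 i 0 = 0 := by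
  classical
  rw [stirling2_eq_card]
  rw [Finset.card_eq_zero, Finset.filter_eq_empty_iff]
  rintro P - ⟨hP, hcard⟩
  rw [Finset.card_eq_zero] at hcard
  subst hcard
  obtain ⟨A, ⟨hA, -⟩, -⟩ := hP.2 ⟨0, hi⟩
  simp at hA

theorem succ_pow_pred (i l : ℕ) (hi : 1 ≤ i) :
    (l + 1) ^ (i - 1) = ∑ b ∈ Finset.Icc 1 i, stirling2 i b * l.descFactorial (b - 1) := by
  classical
  have hIcc : ∑ b ∈ Finset.Icc 1 i, stirling2 i b * l.descFactorial (b - 1)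
      = ∑ b ∈ Finset.range i, stirling2 i (b + 1) * l.descFactorial b := by
    rw [← Finset.Ico_add_one_right_eq_Icc, Finset.sum_Ico_eq_sum_range]
    simp only [Nat.succ_sub_one, Nat.add_sub_cancel]
    apply Finset.sum_congr rfl
    intro b _
    rw [Nat.add_comm 1 b]
    simp
  have key : (l + 1) ^ i
      = (l + 1) * ∑ b ∈ Finset.Icc 1 i, stirling2 i b * l.descFactorial (b - 1) := by
    rw [pow_eq_sum_stirling (l + 1) i, Finset.sum_range_succ', stirling2_zero_right hi, hIcc]
    simp only [Nat.succ_descFactorial_succ, Nat.descFactorial_zero, zero_mul, add_zero,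
      Finset.mul_sum]
    apply Finset.sum_congr rfl
    intro b _
    ring
  have h2 : (l + 1) ^ i = (l + 1) * (l + 1) ^ (i - 1) := by
    conv_lhs => rw [show i = (i - 1) + 1 by omega]
    rw [pow_succ]
    ring
  exact Nat.eq_of_mul_eq_mul_left (Nat.succ_pos l) (h2.symm.trans key)

end SegAux

open Real

namespace SegAux

lemma summable_base {q : ℝ} (hq : |q| < 1) (m : ℕ) :
    Summable (fun l : ℕ => ((l + 1 : ℕ) : ℝ) ^ m * q ^ (l + 1)) := by
  have h : Summable (fun n : ℕ => (n : ℝ) ^ m * q ^ n) :=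
    summable_pow_mul_geometric_of_norm_lt_one m (by simpa using hq)
  exact h.comp_injective (add_left_injective 1)

lemma geom_mgf {Ω : Type*} [MeasurableSpace Ω] (μ : Measure Ω) [IsProbabilityMeasure μ]
    {X : Ω → ℕ} (hX : Measurable X) {q : ℝ} (hq0 : 0 < q) (hq1 : q < 1)
    (hlaw : ∀ j : ℕ, μ {ω | X ω = j} = ENNReal.ofReal ((1 - q) * q ^ j))
    {s : ℝ} (hs : q * Real.exp s < 1) :
    Integrable (fun ω => Real.exp (s * (X ω : ℝ))) μ ∧
      mgf (fun ω => (X ω : ℝ)) μ s = (1 - q) / (1 - q * Real.exp s) := by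
  have hqe0 : 0 ≤ q * Real.exp s := le_of_lt (mul_pos hq0 (Real.exp_pos s))
  have h1q : 0 < 1 - q := by linarith
  have h1qe : 0 < 1 - q * Real.exp s := by linarith
  have hXr : Measurable (fun ω => (X ω : ℝ)) := measurable_from_nat.comp hX
  have hmeasf : Measurable (fun ω => Real.exp (s * (X ω : ℝ))) :=
    (hXr.const_mul s).exp
  have hnonneg : ∀ ω, 0 ≤ Real.exp (s * (X ω : ℝ)) := fun ω => (Real.exp_pos _).le
  -- the summable real series
  have hsummand : ∀ j : ℕ, Real.exp (s * (j : ℝ)) * ((1 - q) * q ^ j)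
      = (1 - q) * (q * Real.exp s) ^ j := by
    intro j
    rw [mul_pow, ← Real.exp_nat_mul]
    ring
  have hsum : Summable (fun j : ℕ => (1 - q) * (q * Real.exp s) ^ j) :=
    (summable_geometric_of_lt_one hqe0 hs).mul_left _
  have htsum : ∑' j : ℕ, (1 - q) * (q * Real.exp s) ^ j
      = (1 - q) / (1 - q * Real.exp s) := by
    rw [tsum_mul_left, tsum_geometric_of_lt_one hqe0 hs, div_eq_mul_inv]
  -- lintegral computation
  have hlint : ∫⁻ ω, ENNReal.ofReal (Real.exp (s * (X ω : ℝ))) ∂μ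
      = ENNReal.ofReal ((1 - q) / (1 - q * Real.exp s)) := by
    have h1 : ∫⁻ ω, ENNReal.ofReal (Real.exp (s * (X ω : ℝ))) ∂μ
        = ∫⁻ j, ENNReal.ofReal (Real.exp (s * (j : ℝ))) ∂(μ.map X) := by
      rw [lintegral_map (measurable_from_nat.ennreal_ofReal) hX]
    rw [h1, lintegral_countable' (fun j : ℕ => ENNReal.ofReal (Real.exp (s * (j : ℝ))))]
    have h2 : ∀ j : ℕ, (μ.map X) {j} = ENNReal.ofReal ((1 - q) * q ^ j) := by
      intro j
      rw [Measure.map_apply hX (measurableSet_singleton j)]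
      have : X ⁻¹' {j} = {ω | X ω = j} := rfl
      rw [this, hlaw j]
    calc ∑' j : ℕ, ENNReal.ofReal (Real.exp (s * (j : ℝ))) * (μ.map X) {j}
        = ∑' j : ℕ, ENNReal.ofReal ((1 - q) * (q * Real.exp s) ^ j) := by
          apply tsum_congr
          intro j
          rw [h2 j, ← ENNReal.ofReal_mul (by positivity : (0:ℝ) ≤ Real.exp (s * (j:ℝ))), hsummand j]
      _ = ENNReal.ofReal ((1 - q) / (1 - q * Real.exp s)) := by
          rw [← ENNReal.ofReal_tsum_of_nonneg (fun j => by positivity) hsum, htsum]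
  have hint : Integrable (fun ω => Real.exp (s * (X ω : ℝ))) μ := by
    refine ⟨hmeasf.aestronglyMeasurable, ?_⟩
    rw [hasFiniteIntegral_iff_norm]
    have : ∀ ω, ENNReal.ofReal ‖Real.exp (s * (X ω : ℝ))‖
        = ENNReal.ofReal (Real.exp (s * (X ω : ℝ))) := by
      intro ω
      rw [Real.norm_eq_abs, abs_of_nonneg (hnonneg ω)]
    simp_rw [this]
    rw [hlint]
    exact ENNReal.ofReal_lt_top
  refine ⟨hint, ?_⟩
  rw [mgf, integral_eq_lintegral_of_nonneg_ae (Filter.Eventually.of_forall hnonneg)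
    hmeasf.aestronglyMeasurable, hlint, ENNReal.toReal_ofReal]
  positivity


lemma iteratedDeriv_family {F : ℕ → ℝ → ℝ} {ε : ℝ} (hε : 0 < ε)
    (hF : ∀ m, ∀ s ∈ Metric.ball (0:ℝ) ε, HasDerivAt (F m) (F (m+1) s) s) :
    ∀ j, iteratedDeriv j (F 0) 0 = F j 0 := by
  intro j
  induction j generalizing F with
  | zero => simp
  | succ j ih =>
    rw [iteratedDeriv_succ']
    have hd : deriv (F 0) =ᶠ[nhds (0:ℝ)] F 1 := by
      filter_upwards [Metric.ball_mem_nhds 0 hε] with s hs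
      exact (hF 0 s hs).deriv
    calc iteratedDeriv j (deriv (F 0)) 0 = iteratedDeriv j (F 1) 0 :=
      Filter.EventuallyEq.iteratedDeriv_eq j hd
    _ = F (j+1) 0 := ih (F := fun m => F (m+1)) (fun m s hs => hF (m+1) s hs)

lemma summable_h {q ε : ℝ} (hq0 : 0 ≤ q) (hqe : q * Real.exp ε < 1) (m : ℕ)
    {s : ℝ} (hs : s ≤ ε) :
    Summable (fun l : ℕ => q ^ (l+1) * ((l+1:ℕ):ℝ) ^ m * Real.exp ((l+1) * s)) := by
  have hqe0 : 0 ≤ q * Real.exp ε := by positivity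
  have hbase : Summable (fun l : ℕ => ((l+1:ℕ):ℝ) ^ m * (q * Real.exp ε) ^ (l+1)) :=
    summable_base (by rwa [abs_of_nonneg hqe0]) m
  apply Summable.of_nonneg_of_le (fun l => by positivity) _ hbase
  intro l
  have h1 : Real.exp ((l+1) * s) ≤ Real.exp ((l+1) * ε) := by
    apply Real.exp_le_exp.2
    have : (0:ℝ) ≤ (l+1 : ℝ) := by positivity
    nlinarith
  calc q ^ (l+1) * ((l+1:ℕ):ℝ) ^ m * Real.exp ((l+1) * s)
      ≤ q ^ (l+1) * ((l+1:ℕ):ℝ) ^ m * Real.exp ((l+1) * ε) := by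
        apply mul_le_mul_of_nonneg_left h1 (by positivity)
    _ = ((l+1:ℕ):ℝ) ^ m * (q * Real.exp ε) ^ (l+1) := by
        rw [mul_pow, ← Real.exp_nat_mul]
        push_cast
        ring

lemma hasDerivAt_h {q ε : ℝ} (hq0 : 0 ≤ q) (hε : 0 < ε) (hqe : q * Real.exp ε < 1) (m : ℕ)
    {s : ℝ} (hs : s ∈ Metric.ball (0:ℝ) ε) :
    HasDerivAt (fun t => ∑' l : ℕ, q ^ (l+1) * ((l+1:ℕ):ℝ) ^ m * Real.exp ((l+1) * t))
      (∑' l : ℕ, q ^ (l+1) * ((l+1:ℕ):ℝ) ^ (m+1) * Real.exp ((l+1) * s)) s := by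
  have hqe0 : 0 ≤ q * Real.exp ε := by positivity
  apply hasDerivAt_tsum_of_isPreconnected
    (u := fun l : ℕ => ((l+1:ℕ):ℝ) ^ (m+1) * (q * Real.exp ε) ^ (l+1))
    (summable_base (by rwa [abs_of_nonneg hqe0]) (m+1)) Metric.isOpen_ball
    (convex_ball (0:ℝ) ε).isPreconnected ?_ ?_ (Metric.mem_ball_self hε) ?_ hs
  · intro l y _
    have h1 : HasDerivAt (fun t : ℝ => Real.exp ((l+1) * t))
        (Real.exp ((l+1) * y) * (l+1)) y := by
      exact (Real.hasDerivAt_exp _).comp y (by simpa using (hasDerivAt_id y).const_mul ((l:ℝ)+1))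
    have := h1.const_mul (q ^ (l+1) * ((l+1:ℕ):ℝ) ^ m)
    refine this.congr_deriv ?_
    push_cast
    ring
  · intro l y hy
    have hy' : |y| < ε := by simpa [Real.dist_eq] using hy
    have h1 : Real.exp ((l+1) * y) ≤ Real.exp ((l+1) * ε) := by
      apply Real.exp_le_exp.2
      have h2 : y ≤ ε := le_of_lt (abs_lt.1 hy').2
      have : (0:ℝ) ≤ (l+1 : ℝ) := by positivity
      nlinarith
    rw [Real.norm_eq_abs, abs_of_nonneg (by positivity)]
    calc q ^ (l+1) * ((l+1:ℕ):ℝ) ^ (m+1) * Real.exp ((l+1) * y)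
        ≤ q ^ (l+1) * ((l+1:ℕ):ℝ) ^ (m+1) * Real.exp ((l+1) * ε) := by
          apply mul_le_mul_of_nonneg_left h1 (by positivity)
      _ = ((l+1:ℕ):ℝ) ^ (m+1) * (q * Real.exp ε) ^ (l+1) := by
          rw [mul_pow, ← Real.exp_nat_mul]
          push_cast
          ring
  · exact summable_h hq0 hqe m (le_of_lt hε)

lemma tsum_h_zero_eq {q : ℝ} (hq0 : 0 ≤ q) {s : ℝ} (h : q * Real.exp s < 1) :
    ∑' l : ℕ, q ^ (l+1) * ((l+1:ℕ):ℝ) ^ 0 * Real.exp ((l+1) * s)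
      = q * Real.exp s / (1 - q * Real.exp s) := by
  have hqe0 : 0 ≤ q * Real.exp s := by positivity
  have h1 : ∀ l : ℕ, q ^ (l+1) * ((l+1:ℕ):ℝ) ^ 0 * Real.exp ((l+1) * s)
      = (q * Real.exp s) * (q * Real.exp s) ^ l := by
    intro l
    rw [pow_zero, mul_pow, ← Real.exp_nat_mul]
    push_cast
    rw [add_mul, Real.exp_add, one_mul]
    ring
  rw [tsum_congr h1, tsum_mul_left, tsum_geometric_of_lt_one hqe0 h]
  rw [div_eq_mul_inv]

lemma hasDerivAt_cgf_geom {q : ℝ} (hq0 : 0 < q) {s : ℝ} (h : q * Real.exp s < 1) :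
    HasDerivAt (fun t => Real.log (1 - q) - Real.log (1 - q * Real.exp t))
      (∑' l : ℕ, q ^ (l+1) * ((l+1:ℕ):ℝ) ^ 0 * Real.exp ((l+1) * s)) s := by
  have h1 : 0 < 1 - q * Real.exp s := by linarith
  have hinner : HasDerivAt (fun t : ℝ => 1 - q * Real.exp t) (-(q * Real.exp s)) s := by
    simpa using ((Real.hasDerivAt_exp s).const_mul q).const_sub 1
  have hlog : HasDerivAt (fun t => Real.log (1 - q * Real.exp t))
      (-(q * Real.exp s) / (1 - q * Real.exp s)) s := hinner.log (ne_of_gt h1)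
  have hfinal := hlog.const_sub (Real.log (1 - q))
  refine hfinal.congr_deriv ?_
  rw [tsum_h_zero_eq (le_of_lt hq0) h]
  field_simp

lemma hasSum_desc {q : ℝ} (hq0 : 0 ≤ q) (hq1 : q < 1) (r : ℕ) :
    HasSum (fun l : ℕ => q ^ (l+1) * (l.descFactorial r : ℝ))
      ((r.factorial : ℝ) * (q / (1 - q)) ^ (r+1)) := by
  have hq' : ‖q‖ < 1 := by rwa [Real.norm_eq_abs, abs_of_nonneg hq0]
  have hs0 : HasSum (fun n : ℕ => (((n + r).choose r : ℕ) : ℝ) * q ^ n)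
      (1 / (1 - q) ^ (r+1)) := hasSum_choose_mul_geometric_of_norm_lt_one r hq'
  have hs1 := hs0.mul_left ((r.factorial : ℝ) * q ^ (r+1))
  have hcomp : (fun n : ℕ => ((r.factorial : ℝ) * q ^ (r+1)) * ((((n + r).choose r : ℕ) : ℝ) * q ^ n))
      = (fun l : ℕ => q ^ (l+1) * (l.descFactorial r : ℝ)) ∘ (fun n => n + r) := by
    funext n
    simp only [Function.comp_apply]
    rw [Nat.descFactorial_eq_factorial_mul_choose]
    push_cast
    ring
  rw [hcomp] at hs1
  have hinj : Function.Injective (fun n : ℕ => n + r) := add_left_injective r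
  have hzero : ∀ x ∉ Set.range (fun n : ℕ => n + r),
      q ^ (x+1) * (x.descFactorial r : ℝ) = 0 := by
    intro x hx
    have hxr : x < r := by
      by_contra hc
      exact hx ⟨x - r, show x - r + r = x by omega⟩
    rw [Nat.descFactorial_eq_zero_iff_lt.2 hxr]
    simp
  have hs2 := (hinj.hasSum_iff hzero).1 hs1
  convert hs2 using 1
  rw [div_pow]
  ring

end SegAux

open SegAux Finset in
theorem segregatingSites_E1 {Ω : Type*} [MeasurableSpace Ω]
    (μ : Measure Ω) [IsProbabilityMeasure μ]
    (θ : ℝ) (hθ : 0 < θ) (n : ℕ) (hn : 2 ≤ n)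
    (M : ℕ → Ω → ℕ) (hmeas : ∀ k, Measurable (M k))
    (hindep : iIndepFun
      (fun k : (Finset.Icc 2 n : Finset ℕ) => M k.val) μ)
    (hlaw : ∀ k, 2 ≤ k → k ≤ n → ∀ j : ℕ, μ {ω | M k ω = j} =
      ENNReal.ofReal
        (((k : ℝ) - 1) / (θ + k - 1) * (θ / (θ + k - 1)) ^ j))
    (i : ℕ) (hi : 1 ≤ i) :
    cumulant i (fun ω => (∑ k ∈ Finset.Icc 2 n, M k ω : ℕ)) μ =
      ∑ k ∈ Finset.Icc 1 (n - 1),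
        ∑' l : ℕ, (θ / (k + θ)) ^ (l + 1) * ((l + 1 : ℕ) : ℝ) ^ (i - 1) := by
  classical
  set q : ℕ → ℝ := fun k => θ / (θ + (k : ℝ) - 1) with hq_def
  have hden : ∀ k : ℕ, 2 ≤ k → (0:ℝ) < θ + (k : ℝ) - 1 := by
    intro k hk
    have : (2:ℝ) ≤ (k:ℝ) := by exact_mod_cast hk
    linarith
  have hq0 : ∀ k : ℕ, 2 ≤ k → 0 < q k := fun k hk => div_pos hθ (hden k hk)
  have hq1 : ∀ k : ℕ, 2 ≤ k → q k < 1 := by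
    intro k hk
    rw [div_lt_one (hden k hk)]
    have : (2:ℝ) ≤ (k:ℝ) := by exact_mod_cast hk
    linarith
  have hqle : ∀ k : ℕ, 2 ≤ k → q k ≤ θ / (θ + 1) := by
    intro k hk
    have h2 : (2:ℝ) ≤ (k:ℝ) := by exact_mod_cast hk
    show θ / (θ + (k:ℝ) - 1) ≤ θ / (θ + 1)
    gcongr <;> linarith
  set ε : ℝ := Real.log ((θ + 1) / θ) / 2 with hε_def
  have hε : 0 < ε := by
    apply div_pos _ (by norm_num)
    apply Real.log_pos
    rw [lt_div_iff₀ hθ]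
    linarith
  have hqe : ∀ k : ℕ, 2 ≤ k → q k * Real.exp ε < 1 := by
    intro k hk
    have h1 : q k * Real.exp ε ≤ θ / (θ + 1) * Real.exp ε :=
      mul_le_mul_of_nonneg_right (hqle k hk) (Real.exp_pos _).le
    have hpos : (0:ℝ) < θ / (θ + 1) := div_pos hθ (by linarith)
    have h2 : θ / (θ + 1) * Real.exp ε < 1 := by
      have hL : Real.log (θ / (θ + 1) * Real.exp ε) < 0 := by
        rw [Real.log_mul (ne_of_gt hpos) (Real.exp_ne_zero ε), Real.log_exp]
        have hlog : Real.log (θ / (θ + 1)) = - Real.log ((θ + 1) / θ) := by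
          rw [← Real.log_inv, inv_div]
        have hP : 0 < Real.log ((θ + 1) / θ) := Real.log_pos (by rw [lt_div_iff₀ hθ]; linarith)
        rw [hlog, hε_def]
        linarith
      exact (Real.log_neg_iff (by positivity)).1 hL
    linarith
  -- per k : law in (1-q) form, integrability, cgf formula
  have hq1sub : ∀ k, 2 ≤ k → (1:ℝ) - q k = ((k:ℝ) - 1) / (θ + (k:ℝ) - 1) := by
    intro k hk
    have hd := ne_of_gt (hden k hk)
    show (1:ℝ) - θ / (θ + (k:ℝ) - 1) = ((k:ℝ) - 1) / (θ + (k:ℝ) - 1)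
    field_simp
    ring
  have hlaw' : ∀ k, 2 ≤ k → k ≤ n → ∀ j : ℕ,
      μ {ω | M k ω = j} = ENNReal.ofReal ((1 - q k) * (q k) ^ j) := by
    intro k hk hkn j
    rw [hlaw k hk hkn j, hq1sub k hk]
  have hint : ∀ k, 2 ≤ k → k ≤ n → ∀ s : ℝ, s < ε →
      Integrable (fun ω => Real.exp (s * (M k ω : ℝ))) μ := by
    intro k hk hkn s hs
    have hqes : q k * Real.exp s < 1 := by
      have := mul_lt_mul_of_pos_left (Real.exp_lt_exp.2 hs) (hq0 k hk)
      linarith [hqe k hk]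
    exact (geom_mgf μ (hmeas k) (hq0 k hk) (hq1 k hk) (hlaw' k hk hkn) hqes).1
  have hcgf : ∀ k, 2 ≤ k → k ≤ n → ∀ s : ℝ, s < ε →
      cgf (fun ω => (M k ω : ℝ)) μ s
        = Real.log (1 - q k) - Real.log (1 - q k * Real.exp s) := by
    intro k hk hkn s hs
    have hqes : q k * Real.exp s < 1 := by
      have := mul_lt_mul_of_pos_left (Real.exp_lt_exp.2 hs) (hq0 k hk)
      linarith [hqe k hk]
    have hmgf := (geom_mgf μ (hmeas k) (hq0 k hk) (hq1 k hk) (hlaw' k hk hkn) hqes).2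
    rw [cgf, hmgf, Real.log_div (by linarith [hq1 k hk]) (by linarith)]
  have hqes : ∀ k, 2 ≤ k → ∀ s : ℝ, s < ε → q k * Real.exp s < 1 := by
    intro k hk s hs
    have := mul_lt_mul_of_pos_left (Real.exp_lt_exp.2 hs) (hq0 k hk)
    linarith [hqe k hk]
  -- independence of real casts
  have hindepR : iIndepFun
      (fun k : (Finset.Icc 2 n : Finset ℕ) => fun ω => ((M k.val ω : ℝ))) μ :=
    hindep.comp (fun _ => (fun m : ℕ => (m : ℝ))) (fun _ => measurable_from_nat)
  have hSfun : (fun ω => ((∑ k ∈ Finset.Icc 2 n, M k ω : ℕ) : ℝ))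
      = ∑ k : (Finset.Icc 2 n : Finset ℕ), (fun ω => ((M k.val ω : ℝ))) := by
    funext ω
    rw [Finset.sum_apply]
    push_cast
    rw [← Finset.sum_coe_sort (Finset.Icc 2 n) (fun k => ((M k ω : ℕ) : ℝ))]
  have hcgfS : ∀ s : ℝ, s < ε →
      cgf (fun ω => ((∑ k ∈ Finset.Icc 2 n, M k ω : ℕ) : ℝ)) μ s
        = ∑ k ∈ Finset.Icc 2 n,
            (Real.log (1 - q k) - Real.log (1 - q k * Real.exp s)) := by
    intro s hs
    have h1 : cgf (∑ k : (Finset.Icc 2 n : Finset ℕ), (fun ω => ((M k.val ω : ℝ)))) μ s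
        = ∑ k : (Finset.Icc 2 n : Finset ℕ), cgf (fun ω => ((M k.val ω : ℝ))) μ s := by
      apply hindepR.cgf_sum (fun k => measurable_from_nat.comp (hmeas k.val))
      intro k _
      exact hint k.val (Finset.mem_Icc.1 k.2).1 (Finset.mem_Icc.1 k.2).2 s hs
    rw [hSfun, h1,
      Finset.sum_coe_sort (Finset.Icc 2 n) (fun k => cgf (fun ω => ((M k ω : ℝ))) μ s)]
    apply Finset.sum_congr rfl
    intro k hk
    exact hcgf k (Finset.mem_Icc.1 hk).1 (Finset.mem_Icc.1 hk).2 s hs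
  set G : ℝ → ℝ := fun s => ∑ k ∈ Finset.Icc 2 n,
      (Real.log (1 - q k) - Real.log (1 - q k * Real.exp s)) with hG_def
  set Hf : ℕ → ℝ → ℝ := fun m s => ∑ k ∈ Finset.Icc 2 n,
      ∑' l : ℕ, (q k) ^ (l+1) * ((l+1:ℕ):ℝ) ^ m * Real.exp ((l+1) * s) with hH_def
  have hball_lt : ∀ s : ℝ, s ∈ Metric.ball (0:ℝ) ε → s < ε := by
    intro s hs
    have := abs_lt.1 (by simpa [Real.dist_eq] using hs)
    linarith [this.2]
  have hGderiv : ∀ s ∈ Metric.ball (0:ℝ) ε, HasDerivAt G (Hf 0 s) s := by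
    intro s hs
    apply HasDerivAt.fun_sum
    intro k hk
    exact hasDerivAt_cgf_geom (hq0 k (Finset.mem_Icc.1 hk).1)
      (hqes k (Finset.mem_Icc.1 hk).1 s (hball_lt s hs))
  have hHderiv : ∀ m, ∀ s ∈ Metric.ball (0:ℝ) ε, HasDerivAt (Hf m) (Hf (m+1) s) s := by
    intro m s hs
    apply HasDerivAt.fun_sum
    intro k hk
    exact hasDerivAt_h (hq0 k (Finset.mem_Icc.1 hk).1).le hε
      (hqe k (Finset.mem_Icc.1 hk).1) m hs
  have hev : (fun s => cgf (fun ω => ((∑ k ∈ Finset.Icc 2 n, M k ω : ℕ) : ℝ)) μ s)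
      =ᶠ[nhds (0:ℝ)] G := by
    filter_upwards [Metric.ball_mem_nhds (0:ℝ) hε] with s hs
    exact hcgfS s (hball_lt s hs)
  have hderivG_ev : deriv G =ᶠ[nhds (0:ℝ)] Hf 0 := by
    filter_upwards [Metric.ball_mem_nhds (0:ℝ) hε] with s hs
    exact (hGderiv s hs).deriv
  obtain ⟨i', rfl⟩ : ∃ i', i = i' + 1 := ⟨i - 1, by omega⟩
  unfold cumulant
  rw [Filter.EventuallyEq.iteratedDeriv_eq _ hev, iteratedDeriv_succ',
    Filter.EventuallyEq.iteratedDeriv_eq _ hderivG_ev, iteratedDeriv_family hε hHderiv i']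
  -- compute Hf i' 0 and reindex
  rw [hH_def]
  simp only [mul_zero, Real.exp_zero, mul_one, Nat.add_sub_cancel]
  apply Finset.sum_nbij' (i := fun k => k - 1) (j := fun k => k + 1)
  · intro k hk
    rw [Finset.mem_Icc] at *
    omega
  · intro k hk
    rw [Finset.mem_Icc] at *
    omega
  · intro k hk
    rw [Finset.mem_Icc] at hk
    omega
  · intro k hk
    rw [Finset.mem_Icc] at hk
    omega
  · intro k hk
    rw [Finset.mem_Icc] at hk
    apply tsum_congr
    intro l
    have hcast : (((k - 1 : ℕ)) : ℝ) = (k : ℝ) - 1 := by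
      have : (1:ℕ) ≤ k := by omega
      push_cast [this]
      ring
    rw [hcast]
    have : θ / ((k:ℝ) - 1 + θ) = q k := by
      rw [hq_def]
      ring_nf
    rw [this]




open SegAux Finset in
theorem segregatingSites_E2aux (θ : ℝ) (hθ : 0 < θ) (n i : ℕ) (hi : 1 ≤ i) :
    ∑ k ∈ Finset.Icc 1 (n - 1), ∑' l : ℕ, (θ / (k + θ)) ^ (l + 1) * ((l + 1 : ℕ) : ℝ) ^ (i - 1)
      = ∑ b ∈ Finset.Icc 1 i,
          (stirling2 i b : ℝ) * Nat.factorial (b - 1) * θ ^ b *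
            ∑ k ∈ Finset.Icc 1 (n - 1), 1 / (k : ℝ) ^ b := by
  have h1 : ∀ k : ℕ, 1 ≤ k →
      ∑' l : ℕ, (θ / ((k:ℝ) + θ)) ^ (l + 1) * ((l + 1 : ℕ) : ℝ) ^ (i - 1)
        = ∑ b ∈ Finset.Icc 1 i,
            (stirling2 i b : ℝ) * (((b-1).factorial : ℝ) * (θ / (k:ℝ)) ^ b) := by
    intro k hk
    have hkR : (1:ℝ) ≤ (k:ℝ) := by exact_mod_cast hk
    have hq0 : 0 < θ / ((k:ℝ) + θ) := by positivity
    have hq1 : θ / ((k:ℝ) + θ) < 1 := by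
      rw [div_lt_one (by positivity)]
      linarith
    have hratio : θ / ((k:ℝ) + θ) / (1 - θ / ((k:ℝ) + θ)) = θ / (k:ℝ) := by
      have h1 : ((k:ℝ) + θ) ≠ 0 := by positivity
      have h2 : (k:ℝ) ≠ 0 := by linarith
      field_simp
      rw [add_sub_cancel_right, div_self h2]
    have hcongr : ∀ l : ℕ, (θ / ((k:ℝ) + θ)) ^ (l + 1) * ((l + 1 : ℕ) : ℝ) ^ (i - 1)
        = ∑ b ∈ Finset.Icc 1 i, (stirling2 i b : ℝ) *
            ((θ / ((k:ℝ) + θ)) ^ (l + 1) * (l.descFactorial (b - 1) : ℝ)) := by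
      intro l
      have hnat := succ_pow_pred i l hi
      have hcast := congrArg (fun t : ℕ => (t : ℝ)) hnat
      push_cast at hcast
      push_cast
      rw [hcast, Finset.mul_sum]
      apply Finset.sum_congr rfl
      intro b _
      ring
    rw [tsum_congr hcongr, Summable.tsum_finsetSum
      (fun b _ => ((hasSum_desc hq0.le hq1 (b - 1)).summable).mul_left _)]
    apply Finset.sum_congr rfl
    intro b hb
    rw [tsum_mul_left, (hasSum_desc hq0.le hq1 (b - 1)).tsum_eq, hratio]
    have hb1 : b - 1 + 1 = b := by
      rw [Finset.mem_Icc] at hb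
      omega
    rw [hb1]
  calc ∑ k ∈ Finset.Icc 1 (n - 1),
        ∑' l : ℕ, (θ / (k + θ)) ^ (l + 1) * ((l + 1 : ℕ) : ℝ) ^ (i - 1)
      = ∑ k ∈ Finset.Icc 1 (n - 1), ∑ b ∈ Finset.Icc 1 i,
          (stirling2 i b : ℝ) * (((b-1).factorial : ℝ) * (θ / (k:ℝ)) ^ b) := by
        apply Finset.sum_congr rfl
        intro k hk
        rw [Finset.mem_Icc] at hk
        exact h1 k hk.1
    _ = ∑ b ∈ Finset.Icc 1 i, ∑ k ∈ Finset.Icc 1 (n - 1),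
          (stirling2 i b : ℝ) * (((b-1).factorial : ℝ) * (θ / (k:ℝ)) ^ b) :=
        Finset.sum_comm
    _ = ∑ b ∈ Finset.Icc 1 i,
          (stirling2 i b : ℝ) * Nat.factorial (b - 1) * θ ^ b *
            ∑ k ∈ Finset.Icc 1 (n - 1), 1 / (k : ℝ) ^ b := by
        apply Finset.sum_congr rfl
        intro b _
        rw [Finset.mul_sum]
        apply Finset.sum_congr rfl
        intro k _
        rw [div_pow]
        ring

/-- Cumulants of the number of segregating sites `S(n) = ∑_{k=2}^n M_k`, where the `M_k`
are independent geometric random variables with success parameter `(k-1)/(θ+k-1)`: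
`κ_i(S(n)) = ∑_{k=1}^{n-1} Li_{1-i}(θ/(k+θ)) = ∑_{b=1}^i S(i,b)(b-1)! θ^b H_{n-1}^{(b)}`. -/
theorem segregatingSites_cumulants {Ω : Type*} [MeasurableSpace Ω]
    (μ : Measure Ω) [IsProbabilityMeasure μ]
    (θ : ℝ) (hθ : 0 < θ) (n : ℕ) (hn : 2 ≤ n)
    (M : ℕ → Ω → ℕ) (hmeas : ∀ k, Measurable (M k))
    (hindep : iIndepFun
      (fun k : (Finset.Icc 2 n : Finset ℕ) => M k.val) μ)
    (hlaw : ∀ k, 2 ≤ k → k ≤ n → ∀ j : ℕ, μ {ω | M k ω = j} =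
      ENNReal.ofReal
        (((k : ℝ) - 1) / (θ + k - 1) * (θ / (θ + k - 1)) ^ j)) :
    ∀ i : ℕ, 1 ≤ i →
      cumulant i (fun ω => (∑ k ∈ Finset.Icc 2 n, M k ω : ℕ)) μ =
          ∑ k ∈ Finset.Icc 1 (n - 1),
            ∑' l : ℕ, (θ / (k + θ)) ^ (l + 1) * ((l + 1 : ℕ) : ℝ) ^ (i - 1) ∧
      cumulant i (fun ω => (∑ k ∈ Finset.Icc 2 n, M k ω : ℕ)) μ =
          ∑ b ∈ Finset.Icc 1 i,
            (stirling2 i b : ℝ) * Nat.factorial (b - 1) * θ ^ b *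
              ∑ k ∈ Finset.Icc 1 (n - 1), 1 / (k : ℝ) ^ b := by
  intro i hi
  have hE1 := segregatingSites_E1 μ θ hθ n hn M hmeas hindep hlaw i hi
  exact ⟨hE1, hE1.trans (segregatingSites_E2aux θ hθ n i hi)⟩
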